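/- Let (R, m) be a Noetherian local ring. If R has only finitely many trace ideals, then dim R ≤ 1. -/

import Mathlib

/-- The trace ideal of an `R`-module `M`. -/
def traceIdeal (R : Type*) [CommRing R] (M : Type*) [AddCommGroup M] [Module R M] : Ideal R :=
  ⨆ f : M →ₗ[R] R, LinearMap.range f

section Aux

variable {R : Type*} [CommRing R]

lemma le_traceIdeal (I : Ideal R) : I ≤ traceIdeal R I := by
  have h := le_iSup (fun f : I →ₗ[R] R => LinearMap.range f) (Submodule.subtype I)
  rwa [Submodule.range_subtype] at h

lemma traceIdeal_idem (I : Ideal R) :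
    traceIdeal R (traceIdeal R I) = traceIdeal R I := by
  refine le_antisymm ?_ (le_traceIdeal _)
  refine iSup_le fun g => ?_
  rintro r ⟨t, rfl⟩
  have key : ∀ (z : R) (hz : z ∈ traceIdeal R I), g ⟨z, hz⟩ ∈ traceIdeal R I := by
    intro z hz
    refine Submodule.iSup_induction' (motive := fun z hz => g ⟨z, hz⟩ ∈ traceIdeal R I)
      (fun f : I →ₗ[R] R => LinearMap.range f) ?_ ?_ ?_ hz
    · intro f w hw
      obtain ⟨m, rfl⟩ := hw
      have hle : LinearMap.range f ≤ traceIdeal R I :=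
        le_iSup (fun f : I →ₗ[R] R => LinearMap.range f) f
      let f' : I →ₗ[R] (traceIdeal R I) :=
        f.codRestrict (traceIdeal R I) (fun m => hle ⟨m, rfl⟩)
      exact le_iSup (fun f : I →ₗ[R] R => LinearMap.range f) (g ∘ₗ f') ⟨m, rfl⟩
    · show g ⟨(0 : R), zero_mem _⟩ ∈ traceIdeal R I
      have h0 : (⟨(0 : R), zero_mem _⟩ : traceIdeal R I) = 0 := rfl
      rw [h0, map_zero]
      exact zero_mem _
    · intro u v hu hv hgu hgv
      show g ⟨u + v, add_mem hu hv⟩ ∈ traceIdeal R I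
      have hadd : (⟨u + v, add_mem hu hv⟩ : traceIdeal R I) = ⟨u, hu⟩ + ⟨v, hv⟩ :=
        Subtype.ext rfl
      rw [hadd, map_add]
      exact add_mem hgu hgv
  exact key t.1 t.2

lemma no_three_primes [IsNoetherianRing R]
    (hfin : {I : Ideal R | traceIdeal R I = I}.Finite)
    (p₀ p₁ p₂ : Ideal R) (h₀ : p₀.IsPrime) (h₁ : p₁.IsPrime) (h₂ : p₂.IsPrime)
    (h01 : p₀ < p₁) (h12 : p₁ < p₂) : False := by
  classical
  obtain ⟨y, hy1, hy0⟩ := SetLike.exists_of_lt h01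
  obtain ⟨x, hx2, hx1⟩ := SetLike.exists_of_lt h12
  -- the annihilator of `y`
  set A : Ideal R := (⊥ : Ideal R).colon (Ideal.span {y}) with hA_def
  have hA : A ≤ p₁ := by
    intro r hr
    rw [hA_def, Ideal.mem_colon_span_singleton] at hr
    have hry : r * y = 0 := by simpa using hr
    have hmem : r * y ∈ p₀ := by rw [hry]; exact zero_mem _
    exact le_of_lt h01 ((h₀.mem_or_mem hmem).resolve_right hy0)
  -- Artin-Rees
  obtain ⟨c, hc⟩ := Ideal.exists_pow_inf_eq_pow_smul (Ideal.span {x})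
    (Ideal.span {y} : Ideal R)
  have colon_le : ∀ n : ℕ,
      (Ideal.span {x ^ (n + c)}).colon (Ideal.span {y}) ≤ Ideal.span {x ^ n} ⊔ A := by
    intro n a ha
    rw [Ideal.mem_colon_span_singleton] at ha
    have h1 : a * y ∈ (Ideal.span {x} ^ (n + c) • (⊤ : Ideal R)) ⊓ Ideal.span {y} := by
      constructor
      · rw [Ideal.smul_eq_mul, Ideal.mul_top, Ideal.span_singleton_pow]
        exact ha
      · exact Ideal.mem_span_singleton'.mpr ⟨a, rfl⟩
    rw [hc (n + c) (by omega)] at h1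
    have h2 : a * y ∈ Ideal.span {x ^ n * y} := by
      have hle : Ideal.span {x} ^ (n + c - c) •
          ((Ideal.span {x} ^ c • (⊤ : Ideal R)) ⊓ Ideal.span {y}) ≤
          Ideal.span {x} ^ n • (Ideal.span {y} : Ideal R) := by
        rw [show n + c - c = n by omega]
        exact Submodule.smul_mono le_rfl inf_le_right
      have h3 := hle h1
      rwa [Ideal.smul_eq_mul, Ideal.span_singleton_pow,
        Ideal.span_singleton_mul_span_singleton] at h3
    obtain ⟨d, hd⟩ := Ideal.mem_span_singleton'.mp h2
    refine Submodule.mem_sup.mpr ⟨d * x ^ n, ?_, a - d * x ^ n, ?_, by ring⟩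
    · exact Ideal.mem_span_singleton'.mpr ⟨d, rfl⟩
    · rw [hA_def, Ideal.mem_colon_span_singleton]
      have hz : (a - d * x ^ n) * y = 0 := by
        have : d * (x ^ n * y) = d * x ^ n * y := by ring
        rw [sub_mul, ← this, hd, sub_self]
      rw [hz]
      exact zero_mem _
  -- upper bound for the trace ideal of (x^n, y)
  have tr_le : ∀ n : ℕ, traceIdeal R (Ideal.span {x ^ n, y}) ≤
      (Ideal.span {x ^ n}).colon (Ideal.span {y}) ⊔
      (Ideal.span {y}).colon (Ideal.span {x ^ n}) := by
    intro n
    refine iSup_le fun f => ?_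
    rintro r ⟨w, rfl⟩
    have hxI : x ^ n ∈ Ideal.span {x ^ n, y} := Ideal.subset_span (Set.mem_insert _ _)
    have hyI : y ∈ Ideal.span {x ^ n, y} :=
      Ideal.subset_span (Set.mem_insert_of_mem _ rfl)
    set X : Ideal.span {x ^ n, y} := ⟨x ^ n, hxI⟩ with hX
    set Y : Ideal.span {x ^ n, y} := ⟨y, hyI⟩ with hY
    have hsmul : y • X = (x ^ n) • Y := by
      apply Subtype.ext
      show y • (x ^ n) = (x ^ n) • y
      simp [smul_eq_mul, mul_comm]
    have hkey : y * f X = x ^ n * f Y := by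
      calc y * f X = y • f X := (smul_eq_mul _ _).symm
        _ = f (y • X) := (map_smul f y X).symm
        _ = f ((x ^ n) • Y) := by rw [hsmul]
        _ = (x ^ n) • f Y := map_smul f _ Y
        _ = x ^ n * f Y := smul_eq_mul _ _
    have ha : f X ∈ (Ideal.span {x ^ n}).colon (Ideal.span {y}) := by
      rw [Ideal.mem_colon_span_singleton, mul_comm, hkey]
      exact Ideal.mem_span_singleton'.mpr ⟨f Y, mul_comm _ _⟩
    have hb : f Y ∈ (Ideal.span {y}).colon (Ideal.span {x ^ n}) := by
      rw [Ideal.mem_colon_span_singleton, mul_comm, ← hkey]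
      exact Ideal.mem_span_singleton'.mpr ⟨f X, mul_comm _ _⟩
    obtain ⟨u, v, huv⟩ := Ideal.mem_span_pair.mp w.2
    have hw : w = u • X + v • Y := by
      apply Subtype.ext
      show (w : R) = u • (x ^ n) + v • y
      simp only [smul_eq_mul]
      exact huv.symm
    rw [hw, map_add, map_smul, map_smul, smul_eq_mul, smul_eq_mul]
    exact add_mem (Ideal.mul_mem_left _ u (Submodule.mem_sup_left ha))
      (Ideal.mul_mem_left _ v (Submodule.mem_sup_right hb))
  -- pigeonhole
  haveI : Finite {I : Ideal R | traceIdeal R I = I} := hfin.to_subtype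
  set F : ℕ → {I : Ideal R | traceIdeal R I = I} := fun n =>
    ⟨traceIdeal R (Ideal.span {x ^ n, y}), traceIdeal_idem _⟩ with hF
  obtain ⟨T, hT⟩ := Finite.exists_infinite_fiber F
  have hs : (F ⁻¹' {T}).Infinite := Set.infinite_coe_iff.mp hT
  have hTval : ∀ {n : ℕ}, n ∈ F ⁻¹' {T} →
      traceIdeal R (Ideal.span {x ^ n, y}) = (T : Ideal R) := by
    intro n hn
    exact congrArg Subtype.val (hn : F n = T)
  obtain ⟨n₀, hn₀mem, hn₀pos⟩ := hs.exists_gt 0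
  have hspan_y_le : Ideal.span {y} ≤ p₁ := Ideal.span_le.mpr (by simpa using hy1)
  have hbound : ∀ j : ℕ, (T : Ideal R) ≤ Ideal.span {x ^ j} ⊔ p₁ := by
    intro j
    obtain ⟨n, hn, hnlt⟩ := hs.exists_gt (j + c)
    have h1 : (T : Ideal R) ≤ (Ideal.span {x ^ n}).colon (Ideal.span {y}) ⊔
        (Ideal.span {y}).colon (Ideal.span {x ^ n}) := by
      rw [← hTval hn]; exact tr_le n
    have h2 : (Ideal.span {x ^ n}).colon (Ideal.span {y}) ≤ Ideal.span {x ^ j} ⊔ p₁ := by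
      have hcol := colon_le (n - c)
      rw [show n - c + c = n by omega] at hcol
      refine hcol.trans (sup_le_sup ?_ hA)
      exact Ideal.span_singleton_le_span_singleton.mpr (pow_dvd_pow x (by omega))
    have h3 : (Ideal.span {y}).colon (Ideal.span {x ^ n}) ≤ p₁ := by
      intro b hb
      rw [Ideal.mem_colon_span_singleton] at hb
      have hby : b * x ^ n ∈ p₁ := hspan_y_le hb
      rcases h₁.mem_or_mem hby with h | h
      · exact h
      · exact absurd (h₁.mem_of_pow_mem _ h) hx1
    exact h1.trans (sup_le h2 (h3.trans le_sup_right))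
  have hx0T : x ^ n₀ ∈ (T : Ideal R) := by
    rw [← hTval hn₀mem]
    exact le_traceIdeal _ (Ideal.subset_span (Set.mem_insert _ _))
  -- Krull intersection in R ⧸ p₁
  haveI := h₁
  set q := Ideal.Quotient.mk p₁ with hq_def
  have hq : ∀ j : ℕ, q (x ^ n₀) ∈ Ideal.span {q x} ^ j := by
    intro j
    obtain ⟨s, hs', t, ht', hst⟩ := Submodule.mem_sup.mp (hbound j hx0T)
    obtain ⟨e, he⟩ := Ideal.mem_span_singleton'.mp hs'
    rw [Ideal.span_singleton_pow, ← hst, map_add,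
      Ideal.Quotient.eq_zero_iff_mem.mpr ht', add_zero, ← he, map_mul]
    exact Ideal.mem_span_singleton'.mpr ⟨q e, by rw [map_pow]⟩
  have hbot : (⨅ i : ℕ, Ideal.span {q x} ^ i) = ⊥ := by
    refine Ideal.iInf_pow_eq_bot_of_isDomain _ ?_
    intro htop
    have h1 : (1 : R ⧸ p₁) ∈ Ideal.span {q x} := htop ▸ Submodule.mem_top
    obtain ⟨e, he⟩ := Ideal.mem_span_singleton'.mp h1
    obtain ⟨e', rfl⟩ := Ideal.Quotient.mk_surjective e
    have hmem : e' * x - 1 ∈ p₁ := by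
      have hq0 : q (e' * x - 1) = 0 := by
        rw [map_sub, map_mul, map_one]
        rw [hq_def] at he ⊢
        rw [he, sub_self]
      exact Ideal.Quotient.eq_zero_iff_mem.mp hq0
    have h1p2 : (1 : R) ∈ p₂ := by
      have hx2' : e' * x ∈ p₂ := Ideal.mul_mem_left _ _ hx2
      have hsub := Ideal.sub_mem p₂ hx2' (le_of_lt h12 hmem)
      simpa using hsub
    exact h₂.ne_top ((Ideal.eq_top_iff_one _).mpr h1p2)
  have hq0 : q (x ^ n₀) = 0 := by
    have hmem : q (x ^ n₀) ∈ (⊥ : Ideal (R ⧸ p₁)) := hbot ▸ (Submodule.mem_iInf _).mpr hq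
    simpa using hmem
  have hxp : x ^ n₀ ∈ p₁ := Ideal.Quotient.eq_zero_iff_mem.mp hq0
  exact hx1 (h₁.mem_of_pow_mem _ hxp)

end Aux

/-- If a Noetherian local ring `R` has only finitely many trace ideals, then `dim R ≤ 1`. -/
theorem krullDim_le_one_of_finite_traceIdeals (R : Type*) [CommRing R] [IsNoetherianRing R]
    [IsLocalRing R] (hfin : {I : Ideal R | traceIdeal R I = I}.Finite) :
    ringKrullDim R ≤ 1 := by
  show Order.krullDim (PrimeSpectrum R) ≤ 1
  rw [Order.krullDim]
  refine iSup_le fun l => ?_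
  by_contra hlen
  have hlen2 : 2 ≤ l.length := by
    by_contra h
    push_neg at h
    exact hlen (by exact_mod_cast Nat.lt_succ_iff.mp h)
  set P₀ := l.toFun ⟨0, by omega⟩ with hP₀
  set P₁ := l.toFun ⟨1, by omega⟩ with hP₁
  set P₂ := l.toFun ⟨2, by omega⟩ with hP₂
  have h01 : P₀ < P₁ := l.strictMono (by exact Fin.mk_lt_mk.mpr (by omega))
  have h12 : P₁ < P₂ := l.strictMono (by exact Fin.mk_lt_mk.mpr (by omega))
  exact no_three_primes hfin P₀.asIdeal P₁.asIdeal P₂.asIdeal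
    P₀.isPrime P₁.isPrime P₂.isPrime
    ((PrimeSpectrum.asIdeal_lt_asIdeal _ _).mpr h01)
    ((PrimeSpectrum.asIdeal_lt_asIdeal _ _).mpr h12)
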